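/- Let x = (x_1,…,x_R) be a vector of distinct real numbers, c = (c_1,…,c_R) a vector of real numbers and B = B(x,c). Let u ∈ ℂ^R be an eigenvector of B with eigenvalue iμ, μ ∈ ℝ (i.e. Bu = iμu, u ≠ 0). Then for every 1 ≤ n ≤ R: μ²|u_n|² = Σ_{m ≠ n} a_{m,n}² · (c_n² c_m² |u_m|² + 2 c_n³ c_m · Re(u_n · conj(u_m))), where a_{m,n} = 1/(x_m − x_n). -/

import Mathlib

open Matrix

/-- The generalized weighted Hilbert matrix `B(x,c)` with entries
`b_{m,n} = c_m c_n / (x_m - x_n)` for `m ≠ n` and `0` on the diagonal. -/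
noncomputable def Bmat {R : ℕ} (x c : Fin R → ℝ) : Matrix (Fin R) (Fin R) ℝ :=
  Matrix.of fun m n => if m = n then 0 else c m * c n / (x m - x n)

set_option maxHeartbeats 1600000 in
/-- If `u` is an eigenvector of `B(x,c)` for the eigenvalue `iμ`, then for every `n`,
`μ² |u_n|² = Σ_{m ≠ n} a_{m,n}² (c_n² c_m² |u_m|² + 2 c_n³ c_m Re(u_n conj(u_m)))`,
where `a_{m,n} = 1/(x_m - x_n)`. -/
theorem eigenvector_identity_B {R : ℕ} (x c : Fin R → ℝ)
    (hx : Function.Injective x) (μ : ℝ) (u : Fin R → ℂ) (hu : u ≠ 0)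
    (h : ((Bmat x c).map (fun r => (r : ℂ))) *ᵥ u = (Complex.I * (μ : ℂ)) • u)
    (n : Fin R) :
    μ ^ 2 * ‖u n‖ ^ 2 =
      ∑ m ∈ Finset.univ.erase n,
        (1 / (x m - x n)) ^ 2 *
          (c n ^ 2 * c m ^ 2 * ‖u m‖ ^ 2 +
            2 * c n ^ 3 * c m * (u n * (starRingEnd ℂ) (u m)).re) := by
  classical
  set b : Fin R → Fin R → ℂ := fun p q => ((Bmat x c p q : ℝ) : ℂ) with hbdef
  have hbdiag : ∀ p, b p p = 0 := by intro p; simp [hbdef, Bmat]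
  have hbval : ∀ p q, p ≠ q → b p q = (((c p * c q) / (x p - x q) : ℝ) : ℂ) := by
    intro p q hpq
    simp [hbdef, Bmat, hpq]
  have hbconj : ∀ p q, (starRingEnd ℂ) (b p q) = b p q := by
    intro p q; simp [hbdef]
  have hxne : ∀ p q : Fin R, p ≠ q → ((x p : ℂ) - x q) ≠ 0 := by
    intro p q hpq
    rw [sub_ne_zero]
    exact fun e => hpq (hx (by exact_mod_cast e))
  have hxner : ∀ p q : Fin R, p ≠ q → (x p - x q) ≠ 0 := by
    intro p q hpq
    rw [sub_ne_zero]
    exact fun e => hpq (hx e)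
  have heq : ∀ p, ∑ k, b p k * u k = Complex.I * μ * u p := by
    intro p
    have := congrFun h p
    simpa [Matrix.mulVec, dotProduct, hbdef] using this
  have heqc : ∀ p, ∑ k, b p k * (starRingEnd ℂ) (u k)
      = -(Complex.I * μ) * (starRingEnd ℂ) (u p) := by
    intro p
    have := congrArg (starRingEnd ℂ) (heq p)
    simp only [map_sum, _root_.map_mul, hbconj, Complex.conj_I, Complex.conj_ofReal] at this
    rw [this]; ring
  set aC : Fin R → Fin R → ℂ := fun p q => ((1 / (x p - x q) : ℝ) : ℂ) with haCdef
  set t : Fin R → Fin R → ℂ := fun m k =>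
    ((c n : ℂ))^2 * aC n m * b m k * (u m * (starRingEnd ℂ) (u k)) with htdef
  have keyid : ∀ m k : Fin R, m ≠ n → k ≠ n → k ≠ m →
      (b n m * u m) * (b n k * (starRingEnd ℂ) (u k)) = t m k + (starRingEnd ℂ) (t k m) := by
    intro m k hmn hkn hkm
    have h1 := hxner n m (Ne.symm hmn)
    have h2 := hxner n k (Ne.symm hkn)
    have h3 := hxner m k (Ne.symm hkm)
    have h4 := hxner k m hkm
    rw [hbval n m (Ne.symm hmn), hbval n k (Ne.symm hkn)]
    simp only [htdef, haCdef, hbval m k (Ne.symm hkm), hbval k m hkm,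
      _root_.map_mul, Complex.conj_ofReal, map_pow]
    rw [Complex.conj_conj]
    push_cast [h1, h2, h3, h4]
    have h1' := hxne n m (Ne.symm hmn)
    have h2' := hxne n k (Ne.symm hkn)
    have h3' := hxne m k (Ne.symm hkm)
    have h4' := hxne k m hkm
    field_simp
    ring
  -- main product identity
  have hprod : (μ : ℂ)^2 * (u n * (starRingEnd ℂ) (u n)) =
      (∑ k, b n k * u k) * (∑ k, b n k * (starRingEnd ℂ) (u k)) := by
    rw [heq n, heqc n]
    have h2 : Complex.I * Complex.I = -1 := Complex.I_mul_I
    linear_combination ((μ:ℂ)^2 * (u n * (starRingEnd ℂ) (u n))) * h2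
  rw [Finset.sum_mul_sum] at hprod
  -- drop the m = n row
  have hrow : ∑ m, ∑ k, (b n m * u m) * (b n k * (starRingEnd ℂ) (u k)) =
      ∑ m ∈ Finset.univ.erase n, ∑ k, (b n m * u m) * (b n k * (starRingEnd ℂ) (u k)) := by
    rw [← Finset.add_sum_erase _ _ (Finset.mem_univ n)]
    simp [hbdiag]
  rw [hrow] at hprod
  -- rewrite each inner sum
  have hinner : ∀ m ∈ Finset.univ.erase n,
      ∑ k, (b n m * u m) * (b n k * (starRingEnd ℂ) (u k)) =
      b n m * b n m * (u m * (starRingEnd ℂ) (u m)) +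
        ∑ k ∈ (Finset.univ.erase n).erase m, (t m k + (starRingEnd ℂ) (t k m)) := by
    intro m hm
    have hmn : m ≠ n := (Finset.mem_erase.1 hm).1
    rw [← Finset.add_sum_erase _ _ (Finset.mem_univ n),
        ← Finset.add_sum_erase _ (fun k => (b n m * u m) * (b n k * (starRingEnd ℂ) (u k)))
          (Finset.mem_erase.2 ⟨hmn, Finset.mem_univ m⟩)]
    rw [Finset.sum_congr rfl (fun k hk => keyid m k hmn
      (Finset.mem_erase.1 (Finset.mem_of_mem_erase hk)).1
      (Finset.mem_erase.1 hk).1)]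
    rw [hbdiag n]
    ring
  rw [Finset.sum_congr rfl hinner, Finset.sum_add_distrib] at hprod
  -- split the off-diagonal part
  have hoff : ∑ m ∈ Finset.univ.erase n, ∑ k ∈ (Finset.univ.erase n).erase m,
        (t m k + (starRingEnd ℂ) (t k m)) =
      (∑ m ∈ Finset.univ.erase n, ∑ k ∈ (Finset.univ.erase n).erase m, t m k) +
      (starRingEnd ℂ) (∑ m ∈ Finset.univ.erase n, ∑ k ∈ (Finset.univ.erase n).erase m, t m k) := by
    simp only [Finset.sum_add_distrib]
    congr 1
    rw [map_sum]
    have hswap : ∑ m ∈ Finset.univ.erase n, ∑ k ∈ (Finset.univ.erase n).erase m,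
        (starRingEnd ℂ) (t k m) =
        ∑ k ∈ Finset.univ.erase n, ∑ m ∈ (Finset.univ.erase n).erase k,
        (starRingEnd ℂ) (t k m) := by
      apply Finset.sum_comm'
      intro p q
      simp only [Finset.mem_erase, Finset.mem_univ, and_true]
      tauto
    rw [hswap]
    exact Finset.sum_congr rfl (fun k _ => (map_sum _ _ _).symm)
  rw [hoff] at hprod
  -- evaluate the t-sums
  have hsplit : ∀ (g : Fin R → ℂ) (m : Fin R), m ≠ n →
      ∑ k ∈ (Finset.univ.erase n).erase m, g k = (∑ k, g k) - g n - g m := by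
    intro g m hm
    have h1 : g n + ∑ k ∈ Finset.univ.erase n, g k = ∑ k, g k :=
      Finset.add_sum_erase _ g (Finset.mem_univ n)
    have h2 : g m + ∑ k ∈ (Finset.univ.erase n).erase m, g k =
        ∑ k ∈ Finset.univ.erase n, g k :=
      Finset.add_sum_erase _ g (Finset.mem_erase.2 ⟨hm, Finset.mem_univ m⟩)
    linear_combination h1 + h2
  have hS1 : ∀ m ∈ Finset.univ.erase n,
      ∑ k ∈ (Finset.univ.erase n).erase m, t m k =
      ((c n : ℂ))^2 * aC n m * u m *
        (-(Complex.I * μ) * (starRingEnd ℂ) (u m) - b m n * (starRingEnd ℂ) (u n)) := by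
    intro m hm
    have hmn : m ≠ n := (Finset.mem_erase.1 hm).1
    have : ∑ k ∈ (Finset.univ.erase n).erase m, t m k =
        ((c n : ℂ))^2 * aC n m * u m *
          ∑ k ∈ (Finset.univ.erase n).erase m, b m k * (starRingEnd ℂ) (u k) := by
      rw [Finset.mul_sum]
      exact Finset.sum_congr rfl (fun k _ => by simp only [htdef]; ring)
    rw [this, hsplit (fun k => b m k * (starRingEnd ℂ) (u k)) m hmn, heqc m, hbdiag m]
    ring
  rw [Finset.sum_congr rfl hS1] at hprod
  -- now take real parts
  have hre := congrArg Complex.re hprod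
  simp only [Complex.add_re, Complex.conj_re, Complex.re_sum] at hre
  have hlhs : ((μ : ℂ)^2 * (u n * (starRingEnd ℂ) (u n))).re = μ^2 * ‖u n‖^2 := by
    rw [Complex.mul_conj, Complex.sq_norm, ← Complex.ofReal_pow, ← Complex.ofReal_mul,
      Complex.ofReal_re]
  rw [hlhs] at hre
  rw [hre]
  simp only [← Finset.sum_add_distrib]
  apply Finset.sum_congr rfl
  intro m hm
  have hmn : m ≠ n := (Finset.mem_erase.1 hm).1
  have h1 := hxner n m (Ne.symm hmn)
  have h2 := hxner m n hmn
  rw [hbval n m (Ne.symm hmn), hbval m n hmn]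
  simp only [Complex.sq_norm, Complex.normSq_apply]
  simp only [haCdef, pow_two, Complex.mul_re, Complex.mul_im, Complex.add_re, Complex.add_im,
    Complex.sub_re, Complex.sub_im, Complex.neg_re, Complex.neg_im, Complex.I_re, Complex.I_im,
    Complex.ofReal_re, Complex.ofReal_im, Complex.conj_re, Complex.conj_im]
  field_simp
  ring
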